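/- With F₀ = f, Fₖ = iₖ/f (k = 1,2,3) and w = φ₀ + φ₁i₁ + φ₂i₂ + φ₃i₃, the condition Σⱼ₌₀³(Dφⱼ)Fⱼ = 0 is equivalent to D(w + \bar{w})f + D(w - \bar{w})(1/f) = 0, which in turn is equivalent to the Beltrami-type equation Dw = ((1 - f²)/(1 + f²))·D\bar{w}, provided 1 + f² does not vanish. -/

import Mathlib

noncomputable section

/-- ℝ³ -/
abbrev V3 := Fin 3 → ℝ
/-- Complex quaternions ℍ(ℂ) -/
abbrev HC := Quaternion ℂ

/-- partial derivative ∂ₖ of a function on ℝ³ -/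
noncomputable def pd {E : Type*} [NormedAddCommGroup E] [NormedSpace ℝ E]
    (k : Fin 3) (g : V3 → E) (x : V3) : E :=
  fderiv ℝ g x (Pi.single k 1)

noncomputable def grad {E : Type*} [NormedAddCommGroup E] [NormedSpace ℝ E]
    (g : V3 → E) (x : V3) : Fin 3 → E := fun k => pd k g x

noncomputable def dvg {E : Type*} [NormedAddCommGroup E] [NormedSpace ℝ E]
    (F : V3 → Fin 3 → E) (x : V3) : E :=
  pd 0 (fun y => F y 0) x + pd 1 (fun y => F y 1) x + pd 2 (fun y => F y 2) x

noncomputable def rot {E : Type*} [NormedAddCommGroup E] [NormedSpace ℝ E]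
    (F : V3 → Fin 3 → E) (x : V3) : Fin 3 → E :=
  ![pd 1 (fun y => F y 2) x - pd 2 (fun y => F y 1) x,
    pd 2 (fun y => F y 0) x - pd 0 (fun y => F y 2) x,
    pd 0 (fun y => F y 1) x - pd 1 (fun y => F y 0) x]

/-- scalar Laplacian -/
noncomputable def lapS {E : Type*} [NormedAddCommGroup E] [NormedSpace ℝ E]
    (g : V3 → E) (x : V3) : E :=
  pd 0 (pd 0 g) x + pd 1 (pd 1 g) x + pd 2 (pd 2 g) x

/-- purely vectorial quaternion from a ℂ³ vector -/
def vecq (v : Fin 3 → ℂ) : HC := ⟨0, v 0, v 1, v 2⟩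
/-- scalar quaternion -/
def scq (a : ℂ) : HC := ⟨a, 0, 0, 0⟩

def e1 : HC := ⟨0,1,0,0⟩
def e2 : HC := ⟨0,0,1,0⟩
def e3 : HC := ⟨0,0,0,1⟩

/-- vector part of a quaternion, as a ℂ³ vector -/
def vecPart (a : HC) : Fin 3 → ℂ := ![a.imI, a.imJ, a.imK]

/-- quaternionic conjugation C_H -/
def qconj (a : HC) : HC := ⟨a.re, -a.imI, -a.imJ, -a.imK⟩

/-- componentwise partial derivative of an ℍ(ℂ)-valued function -/
noncomputable def qpd (k : Fin 3) (F : V3 → HC) (x : V3) : HC :=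
  ⟨pd k (fun y => (F y).re) x, pd k (fun y => (F y).imI) x,
   pd k (fun y => (F y).imJ) x, pd k (fun y => (F y).imK) x⟩

/-- The Moisil–Teodorescu (Dirac) operator D = Σₖ iₖ∂ₖ -/
noncomputable def Dq (F : V3 → HC) (x : V3) : HC :=
  e1 * qpd 0 F x + e2 * qpd 1 F x + e3 * qpd 2 F x

/-- componentwise Laplacian of an ℍ(ℂ)-valued function -/
noncomputable def qlap (F : V3 → HC) (x : V3) : HC :=
  qpd 0 (qpd 0 F) x + qpd 1 (qpd 1 F) x + qpd 2 (qpd 2 F) x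

/-- ContDiffOn for ℍ(ℂ)-valued functions, componentwise -/
def QContDiffOn (n : ℕ∞) (F : V3 → HC) (s : Set V3) : Prop :=
  ContDiffOn ℝ n (fun x => (F x).re) s ∧ ContDiffOn ℝ n (fun x => (F x).imI) s ∧
  ContDiffOn ℝ n (fun x => (F x).imJ) s ∧ ContDiffOn ℝ n (fun x => (F x).imK) s

/-- euclidean norm on ℝ³ -/
noncomputable def nrm (x : V3) : ℝ := Real.sqrt (x 0 ^ 2 + x 1 ^ 2 + x 2 ^ 2)

/-- fundamental solution of the Helmholtz operator -/
noncomputable def theta (α : ℂ) (x : V3) : ℂ :=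
  -Complex.exp (Complex.I * α * (nrm x : ℂ)) / (4 * Real.pi * (nrm x : ℂ))

/-- x as a purely vectorial quaternion -/
def xq (x : V3) : HC := vecq fun k => ((x k : ℝ) : ℂ)


/-- The generating quartet F₀ = f, Fₖ = iₖ/f. -/
noncomputable def Ffun (f : V3 → ℂ) : Fin 4 → V3 → HC :=
  ![fun y => scq (f y), fun y => e1 * scq (f y)⁻¹,
    fun y => e2 * scq (f y)⁻¹, fun y => e3 * scq (f y)⁻¹]

/-- w = φ₀ + φ₁i₁ + φ₂i₂ + φ₃i₃. -/
def wfun (φ : Fin 4 → V3 → ℂ) (y : V3) : HC := ⟨φ 0 y, φ 1 y, φ 2 y, φ 3 y⟩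


def qk (r i j k : ℂ) : HC := ⟨r,i,j,k⟩

lemma pd_add' {g h : V3 → ℂ} {k : Fin 3} {x : V3} (hg : DifferentiableAt ℝ g x)
    (hh : DifferentiableAt ℝ h x) :
    pd k (fun y => g y + h y) x = pd k g x + pd k h x := by
  unfold pd; rw [fderiv_fun_add hg hh]; rfl

lemma pd_const {k : Fin 3} {x : V3} (a : ℂ) : pd k (fun _ => a) x = 0 := by
  unfold pd; rw [fderiv_fun_const]; rfl

lemma pd_neg' (g : V3 → ℂ) (k : Fin 3) (x : V3) :
    pd k (fun y => -g y) x = -pd k g x := by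
  unfold pd; rw [fderiv_fun_neg]; rfl

set_option maxHeartbeats 1000000 in
/-- Σ(Dφⱼ)Fⱼ = 0 ⇔ D(w+w̄)f + D(w-w̄)(1/f) = 0 ⇔
Dw = ((1-f²)/(1+f²))·Dw̄. -/
theorem stmt17 (Ω : Set V3) (hΩ : IsOpen Ω) (f : V3 → ℂ)
    (hf : ContDiffOn ℝ 1 f Ω) (hf0 : ∀ x ∈ Ω, f x ≠ 0)
    (h1f : ∀ x ∈ Ω, 1 + f x ^ 2 ≠ 0)
    (φ : Fin 4 → V3 → ℂ) (hφ : ∀ j, ContDiffOn ℝ 1 (φ j) Ω) :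
    ∀ x ∈ Ω,
      ((∑ j : Fin 4, vecq (grad (φ j) x) * Ffun f j x = 0) ↔
        (Dq (fun y => wfun φ y + qconj (wfun φ y)) x * scq (f x)
          + Dq (fun y => wfun φ y - qconj (wfun φ y)) x * scq (f x)⁻¹ = 0)) ∧
      ((Dq (fun y => wfun φ y + qconj (wfun φ y)) x * scq (f x)
          + Dq (fun y => wfun φ y - qconj (wfun φ y)) x * scq (f x)⁻¹ = 0) ↔
        (Dq (wfun φ) x
          = scq ((1 - f x ^ 2) / (1 + f x ^ 2)) * Dq (fun y => qconj (wfun φ y)) x)) := by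
  intro x hx
  have hmem : Ω ∈ nhds x := hΩ.mem_nhds hx
  have hd : ∀ j, DifferentiableAt ℝ (φ j) x := fun j =>
    ((hφ j).differentiableOn one_ne_zero).differentiableAt hmem
  have hc0 : f x ≠ 0 := hf0 x hx
  have hc1 : 1 + f x ^ 2 ≠ 0 := h1f x hx
  have K1 : (fun y => wfun φ y + qconj (wfun φ y))
      = fun y => (⟨φ 0 y + φ 0 y, 0, 0, 0⟩ : HC) := by
    funext y
    show (⟨_,_,_,_⟩ : HC) + ⟨_,_,_,_⟩ = _
    ext <;> simp [wfun, qconj]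
  have K2 : (fun y => wfun φ y - qconj (wfun φ y))
      = fun y => (⟨0, φ 1 y + φ 1 y, φ 2 y + φ 2 y, φ 3 y + φ 3 y⟩ : HC) := by
    funext y
    show (⟨_,_,_,_⟩ : HC) - ⟨_,_,_,_⟩ = _
    ext <;> simp [wfun, qconj] <;> ring
  have hqpd1 : ∀ k, qpd k (fun y => wfun φ y + qconj (wfun φ y)) x
      = ⟨2 * pd k (φ 0) x, 0, 0, 0⟩ := by
    intro k
    rw [K1]
    show (⟨pd k (fun y => φ 0 y + φ 0 y) x, pd k (fun _ => (0:ℂ)) x,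
      pd k (fun _ => (0:ℂ)) x, pd k (fun _ => (0:ℂ)) x⟩ : HC) = _
    rw [pd_add' (hd 0) (hd 0), pd_const]
    ext <;> simp <;> ring
  have hqpd2 : ∀ k, qpd k (fun y => wfun φ y - qconj (wfun φ y)) x
      = ⟨0, 2 * pd k (φ 1) x, 2 * pd k (φ 2) x, 2 * pd k (φ 3) x⟩ := by
    intro k
    rw [K2]
    show (⟨pd k (fun _ => (0:ℂ)) x, pd k (fun y => φ 1 y + φ 1 y) x,
      pd k (fun y => φ 2 y + φ 2 y) x, pd k (fun y => φ 3 y + φ 3 y) x⟩ : HC) = _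
    rw [pd_add' (hd 1) (hd 1), pd_add' (hd 2) (hd 2), pd_add' (hd 3) (hd 3), pd_const]
    ext <;> simp <;> ring
  have hqpdw : ∀ k, qpd k (wfun φ) x
      = ⟨pd k (φ 0) x, pd k (φ 1) x, pd k (φ 2) x, pd k (φ 3) x⟩ := fun k => rfl
  have hqpdc : ∀ k, qpd k (fun y => qconj (wfun φ y)) x
      = ⟨pd k (φ 0) x, -pd k (φ 1) x, -pd k (φ 2) x, -pd k (φ 3) x⟩ := by
    intro k
    show (⟨pd k (φ 0) x, pd k (fun y => -(φ 1 y)) x,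
      pd k (fun y => -(φ 2 y)) x, pd k (fun y => -(φ 3 y)) x⟩ : HC) = _
    rw [pd_neg' (φ 1), pd_neg' (φ 2), pd_neg' (φ 3)]
  have hE1 : (∑ j : Fin 4, vecq (grad (φ j) x) * Ffun f j x)
      = qk (-(pd 0 (φ 1) x + pd 1 (φ 2) x + pd 2 (φ 3) x) * (f x)⁻¹)
          (pd 0 (φ 0) x * f x + (pd 1 (φ 3) x - pd 2 (φ 2) x) * (f x)⁻¹)
          (pd 1 (φ 0) x * f x + (pd 2 (φ 1) x - pd 0 (φ 3) x) * (f x)⁻¹)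
          (pd 2 (φ 0) x * f x + (pd 0 (φ 2) x - pd 1 (φ 1) x) * (f x)⁻¹) := by
    simp only [Fin.sum_univ_four, Ffun, grad, Matrix.cons_val_zero, Matrix.cons_val_one,
      Matrix.head_cons, Matrix.cons_val_two, Matrix.tail_cons, Matrix.cons_val_three]
    ext <;>
      simp [Quaternion.re_mul, Quaternion.imI_mul, Quaternion.imJ_mul, Quaternion.imK_mul] <;>
      simp [vecq, scq, qk, e1, e2, e3, grad, QuaternionAlgebra.re_mul, QuaternionAlgebra.imI_mul,
        QuaternionAlgebra.imJ_mul, QuaternionAlgebra.imK_mul] <;> ring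
  have hE2 : Dq (fun y => wfun φ y + qconj (wfun φ y)) x * scq (f x)
        + Dq (fun y => wfun φ y - qconj (wfun φ y)) x * scq (f x)⁻¹
      = qk (2 * (-(pd 0 (φ 1) x + pd 1 (φ 2) x + pd 2 (φ 3) x) * (f x)⁻¹))
          (2 * (pd 0 (φ 0) x * f x + (pd 1 (φ 3) x - pd 2 (φ 2) x) * (f x)⁻¹))
          (2 * (pd 1 (φ 0) x * f x + (pd 2 (φ 1) x - pd 0 (φ 3) x) * (f x)⁻¹))
          (2 * (pd 2 (φ 0) x * f x + (pd 0 (φ 2) x - pd 1 (φ 1) x) * (f x)⁻¹)) := by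
    simp only [Dq]
    ext <;>
      simp [Quaternion.re_mul, Quaternion.imI_mul, Quaternion.imJ_mul, Quaternion.imK_mul] <;>
      simp [scq, qk, e1, e2, e3, hqpd1, hqpd2, QuaternionAlgebra.re_mul, QuaternionAlgebra.imI_mul,
        QuaternionAlgebra.imJ_mul, QuaternionAlgebra.imK_mul] <;> ring
  have hE3 : Dq (wfun φ) x
      = qk (-(pd 0 (φ 1) x + pd 1 (φ 2) x + pd 2 (φ 3) x))
          (pd 0 (φ 0) x + pd 1 (φ 3) x - pd 2 (φ 2) x)
          (pd 1 (φ 0) x + pd 2 (φ 1) x - pd 0 (φ 3) x)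
          (pd 2 (φ 0) x + pd 0 (φ 2) x - pd 1 (φ 1) x) := by
    simp only [Dq]
    ext <;>
      simp [Quaternion.re_mul, Quaternion.imI_mul, Quaternion.imJ_mul, Quaternion.imK_mul] <;>
      simp [qk, e1, e2, e3, hqpdw, QuaternionAlgebra.re_mul, QuaternionAlgebra.imI_mul,
        QuaternionAlgebra.imJ_mul, QuaternionAlgebra.imK_mul] <;> ring
  have hE4 : Dq (fun y => qconj (wfun φ y)) x
      = qk (pd 0 (φ 1) x + pd 1 (φ 2) x + pd 2 (φ 3) x)
          (pd 0 (φ 0) x - pd 1 (φ 3) x + pd 2 (φ 2) x)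
          (pd 1 (φ 0) x - pd 2 (φ 1) x + pd 0 (φ 3) x)
          (pd 2 (φ 0) x - pd 0 (φ 2) x + pd 1 (φ 1) x) := by
    simp only [Dq]
    ext <;>
      simp [Quaternion.re_mul, Quaternion.imI_mul, Quaternion.imJ_mul, Quaternion.imK_mul] <;>
      simp [qk, e1, e2, e3, hqpdc, QuaternionAlgebra.re_mul, QuaternionAlgebra.imI_mul,
        QuaternionAlgebra.imJ_mul, QuaternionAlgebra.imK_mul] <;> ring
  clear hqpd1 hqpd2 hqpdw hqpdc K1 K2
  rw [hE1, hE2, hE3, hE4]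
  clear hE1 hE2 hE3 hE4
  simp only [Quaternion.ext_iff, Quaternion.re_mul, Quaternion.imI_mul, Quaternion.imJ_mul, Quaternion.imK_mul,
    Quaternion.re_zero, Quaternion.imI_zero, Quaternion.imJ_zero, Quaternion.imK_zero]
  simp only [Quaternion.ext_iff, Quaternion.re_mul, Quaternion.imI_mul, Quaternion.imJ_mul,
    Quaternion.imK_mul, QuaternionAlgebra.ext_iff, QuaternionAlgebra.re_mul, QuaternionAlgebra.imI_mul,
    QuaternionAlgebra.imJ_mul, QuaternionAlgebra.imK_mul, QuaternionAlgebra.re_zero,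
    QuaternionAlgebra.imI_zero, QuaternionAlgebra.imJ_zero, QuaternionAlgebra.imK_zero,
    qk, scq, mul_zero, zero_mul, add_zero, zero_add, sub_zero, neg_zero]
  constructor
  · constructor
    · rintro ⟨h1, h2, h3, h4⟩
      exact ⟨by rw [h1, mul_zero], by rw [h2, mul_zero], by rw [h3, mul_zero], by rw [h4, mul_zero]⟩
    · rintro ⟨h1, h2, h3, h4⟩
      exact ⟨by linear_combination h1 / 2, by linear_combination h2 / 2,
        by linear_combination h3 / 2, by linear_combination h4 / 2⟩
  · constructor
    · rintro ⟨h1, h2, h3, h4⟩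
      field_simp at h1 h2 h3 h4
      refine ⟨?_, ?_, ?_, ?_⟩ <;> field_simp
      · linear_combination h1
      · linear_combination h2
      · linear_combination h3
      · linear_combination h4
    · rintro ⟨h1, h2, h3, h4⟩
      field_simp at h1 h2 h3 h4
      refine ⟨?_, ?_, ?_, ?_⟩ <;> field_simp
      · linear_combination h1
      · linear_combination h2
      · linear_combination h3
      · linear_combination h4
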